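/- Let G be a group acting on a set X, and suppose there exist a nontrivial partition X = X₁ ⊔ X₂ and bijections γ₁ : X₁ → X, γ₂ : X₂ → X, each piecewise given by the action of finitely many group elements. Then the G-space (G, X) does not satisfy the Følner condition: there exist a finite R ⊆ G and n ∈ ℕ such that every finite nonempty F ⊆ X satisfies |∂_R F| ≥ |F|/n. -/

import Mathlib

open Pointwise

/-- If there is a nontrivial partition `X = X₁ ⊔ X₂` with bijections `γᵢ : Xᵢ → X`,
each piecewise given by the action of finitely many group elements, then the `G`-space
`X` does not satisfy the Følner condition: for some finite `R ⊆ G` and `n`, every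
finite nonempty `F ⊆ X` satisfies `|∂_R F| ≥ |F|/n`. -/
theorem not_folner_of_doubling {G X : Type*} [Group G] [MulAction G X]
    (X₁ X₂ : Set X) (h1 : X₁.Nonempty) (h2 : X₂.Nonempty)
    (hu : X₁ ∪ X₂ = Set.univ) (hd : Disjoint X₁ X₂)
    (γ₁ γ₂ : X → X)
    (hb1 : Set.BijOn γ₁ X₁ Set.univ) (hb2 : Set.BijOn γ₂ X₂ Set.univ)
    (hp1 : ∃ (S : Finset G) (P : G → Set X), (⋃ g ∈ S, P g) = X₁ ∧
        ∀ g ∈ S, ∀ x ∈ P g, γ₁ x = g • x)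
    (hp2 : ∃ (S : Finset G) (P : G → Set X), (⋃ g ∈ S, P g) = X₂ ∧
        ∀ g ∈ S, ∀ x ∈ P g, γ₂ x = g • x) :
    ∃ (R : Finset G) (n : ℕ), 0 < n ∧ ∀ F : Set X, F.Finite → F.Nonempty →
      F.ncard ≤ n * {x | x ∉ F ∧ ∃ g : G, (g ∈ R ∨ g⁻¹ ∈ R) ∧ g • x ∈ F}.ncard := by
  classical
  obtain ⟨S₁, P₁, hP₁, hγ₁⟩ := hp1
  obtain ⟨S₂, P₂, hP₂, hγ₂⟩ := hp2
  refine ⟨S₁ ∪ S₂, 1, one_pos, fun F hF hFne => ?_⟩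
  set D : Set X := {x | x ∉ F ∧ ∃ g : G, (g ∈ S₁ ∪ S₂ ∨ g⁻¹ ∈ S₁ ∪ S₂) ∧ g • x ∈ F} with hD
  set A : Set X := X₁ ∩ γ₁ ⁻¹' F with hA
  set B : Set X := X₂ ∩ γ₂ ⁻¹' F with hB
  -- images
  have himA : γ₁ '' A = F := by
    apply Set.Subset.antisymm
    · rintro y ⟨x, ⟨hx1, hx2⟩, rfl⟩; exact hx2
    · intro y hy
      obtain ⟨x, hx, rfl⟩ := hb1.surjOn (Set.mem_univ y)
      exact ⟨x, ⟨hx, hy⟩, rfl⟩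
  have himB : γ₂ '' B = F := by
    apply Set.Subset.antisymm
    · rintro y ⟨x, ⟨hx1, hx2⟩, rfl⟩; exact hx2
    · intro y hy
      obtain ⟨x, hx, rfl⟩ := hb2.surjOn (Set.mem_univ y)
      exact ⟨x, ⟨hx, hy⟩, rfl⟩
  have hinjA : Set.InjOn γ₁ A := hb1.injOn.mono Set.inter_subset_left
  have hinjB : Set.InjOn γ₂ B := hb2.injOn.mono Set.inter_subset_left
  have hAfin : A.Finite := Set.Finite.of_finite_image (himA ▸ hF) hinjA
  have hBfin : B.Finite := Set.Finite.of_finite_image (himB ▸ hF) hinjB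
  have hAcard : A.ncard = F.ncard := by
    rw [← himA, Set.ncard_image_of_injOn hinjA]
  have hBcard : B.ncard = F.ncard := by
    rw [← himB, Set.ncard_image_of_injOn hinjB]
  have hABdisj : Disjoint A B :=
    hd.mono Set.inter_subset_left Set.inter_subset_left
  have hUcard : (A ∪ B).ncard = 2 * F.ncard := by
    rw [Set.ncard_union_eq hABdisj hAfin hBfin, hAcard, hBcard]; ring
  -- boundary containment
  have hsub : (A ∪ B) \ F ⊆ D := by
    rintro x ⟨hx, hxF⟩
    refine ⟨hxF, ?_⟩
    rcases hx with ⟨hx1, hx2⟩ | ⟨hx1, hx2⟩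
    · rw [← hP₁] at hx1
      simp only [Set.mem_iUnion] at hx1
      obtain ⟨g, hgS, hgP⟩ := hx1
      exact ⟨g, Or.inl (Finset.mem_union_left _ hgS), (hγ₁ g hgS x hgP) ▸ hx2⟩
    · rw [← hP₂] at hx1
      simp only [Set.mem_iUnion] at hx1
      obtain ⟨g, hgS, hgP⟩ := hx1
      exact ⟨g, Or.inl (Finset.mem_union_right _ hgS), (hγ₂ g hgS x hgP) ▸ hx2⟩
  -- D is finite
  have hDfin : D.Finite := by
    have : D ⊆ ⋃ g ∈ (S₁ ∪ S₂) ∪ (S₁ ∪ S₂)⁻¹, (g • ·) ⁻¹' F := by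
      rintro x ⟨-, g, hg, hgx⟩
      simp only [Set.mem_iUnion]
      rcases hg with hg | hg
      · exact ⟨g, Finset.mem_union_left _ hg, hgx⟩
      · exact ⟨g, Finset.mem_union_right _ (by simpa using hg), hgx⟩
    refine Set.Finite.subset ?_ this
    apply Set.Finite.biUnion (Finset.finite_toSet _)
    intro g _
    exact hF.preimage (MulAction.injective g).injOn
  -- conclude
  have h1' : (A ∪ B) ⊆ F ∪ ((A ∪ B) \ F) := by
    intro x hx
    by_cases hxF : x ∈ F
    · exact Or.inl hxF
    · exact Or.inr ⟨hx, hxF⟩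
  have h2' : (A ∪ B).ncard ≤ F.ncard + ((A ∪ B) \ F).ncard := by
    calc (A ∪ B).ncard ≤ (F ∪ ((A ∪ B) \ F)).ncard :=
          Set.ncard_le_ncard h1' (hF.union ((hAfin.union hBfin).diff (t := F)))
      _ ≤ F.ncard + ((A ∪ B) \ F).ncard := Set.ncard_union_le _ _
  have h3' : ((A ∪ B) \ F).ncard ≤ D.ncard := Set.ncard_le_ncard hsub hDfin
  omega
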